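/- Let d = 4m for a positive integer m, and let S = {(0, 2i−1) : i = 1, …, d/4} ∪ {(0,0), (d/2, 0), (d/2, d/2 + 1)} ⊆ ℤ/dℤ × ℤ/dℤ, a set of 3 + d/4 pairs. Then there is no unit vector α ∈ ℂ^d such that the vectors X^a Z^b α for (a,b) ∈ S are pairwise orthogonal; that is, this set of 3 + d/4 generalized Bell states in d⊗d is 1-LOCC indistinguishable, and hence f_GBS(d) ≤ 3 + d/4. -/

import Mathlib

open Complex

/-- `ω d = exp(2πi/d)`, the primitive `d`-th root of unity in `ℂ`. -/
noncomputable def ω (d : ℕ) : ℂ := Complex.exp (2 * Real.pi * Complex.I / d)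

/-- The generalized Pauli operator `U_{m,n} = X^m Z^n` acting on `ℂ^d`
(coordinates indexed by `ZMod d`), where `X e_j = e_{j+1}` and `Z e_j = ω^j e_j`:
`(U_{m,n} α)_k = ω^{n (k-m)} α_{k-m}`. -/
noncomputable def pU (d : ℕ) [NeZero d] (m n : ZMod d) (α : ZMod d → ℂ) : ZMod d → ℂ :=
  fun k => ω d ^ (n.val * (k - m).val) * α (k - m)

/-- The standard Hermitian inner product on `ℂ^d`. -/
noncomputable def ip (d : ℕ) [NeZero d] (α β : ZMod d → ℂ) : ℂ :=
  ∑ j : ZMod d, (starRingEnd ℂ) (α j) * β j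

/-! ### Auxiliary lemmas about `ω` and the character `eZ` -/

/-- The additive character `x ↦ ω^x.val` on `ZMod d`. -/
noncomputable def eZ (d : ℕ) [NeZero d] (x : ZMod d) : ℂ := ω d ^ x.val

section Aux

variable (d : ℕ) [NeZero d]

lemma omega_prim : IsPrimitiveRoot (ω d) d :=
  Complex.isPrimitiveRoot_exp d (NeZero.ne d)

lemma omega_pow_d : ω d ^ d = 1 := (omega_prim d).pow_eq_one

lemma omega_ne_zero : ω d ≠ 0 := Complex.exp_ne_zero _

lemma omega_pow_mod (a : ℕ) : ω d ^ a = ω d ^ (a % d) := by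
  conv_lhs => rw [← Nat.div_add_mod a d]
  rw [pow_add, pow_mul, omega_pow_d, one_pow, one_mul]

lemma eZ_add (x y : ZMod d) : eZ d (x + y) = eZ d x * eZ d y := by
  unfold eZ
  rw [ZMod.val_add, ← omega_pow_mod, pow_add]

lemma eZ_zero : eZ d 0 = 1 := by
  unfold eZ
  rw [ZMod.val_zero, pow_zero]

lemma eZ_ne_zero (x : ZMod d) : eZ d x ≠ 0 := pow_ne_zero _ (omega_ne_zero d)

lemma eZ_neg (x : ZMod d) : eZ d (-x) = (eZ d x)⁻¹ :=
  eq_inv_of_mul_eq_one_left (by rw [← eZ_add, neg_add_cancel, eZ_zero])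

lemma conj_omega : (starRingEnd ℂ) (ω d) = (ω d)⁻¹ := by
  unfold ω
  rw [← Complex.exp_conj, ← Complex.exp_neg]
  congr 1
  rw [map_div₀, map_mul, map_mul, Complex.conj_I, Complex.conj_ofReal, map_ofNat, map_natCast]
  ring

lemma eZ_conj (x : ZMod d) : (starRingEnd ℂ) (eZ d x) = eZ d (-x) := by
  rw [eZ_neg]
  unfold eZ
  rw [map_pow, conj_omega, inv_pow]

lemma eZ_nat_mul (n : ℕ) (x : ZMod d) : eZ d ((n : ZMod d) * x) = eZ d x ^ n := by
  induction n with
  | zero => simpa using eZ_zero d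
  | succ k ih =>
      have h : ((k + 1 : ℕ) : ZMod d) * x = (k : ZMod d) * x + x := by push_cast; ring
      rw [h, eZ_add, ih, pow_succ]

lemma eZ_pow_d (x : ZMod d) : eZ d x ^ d = 1 := by
  unfold eZ
  rw [← pow_mul, mul_comm, pow_mul, omega_pow_d, one_pow]

lemma eZ_eq_one_iff (x : ZMod d) : eZ d x = 1 ↔ x = 0 := by
  constructor
  · intro hx
    have hdvd := ((omega_prim d).pow_eq_one_iff_dvd x.val).mp hx
    have hlt := ZMod.val_lt x
    have hv : x.val = 0 := by
      rcases Nat.eq_zero_or_pos x.val with h | h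
      · exact h
      · exact absurd (Nat.le_of_dvd h hdvd) (by omega)
    rw [← ZMod.natCast_zmod_val x, hv, Nat.cast_zero]
  · rintro rfl
    exact eZ_zero d

lemma sum_zmod {M : Type*} [AddCommMonoid M] (f : ZMod d → M) :
    ∑ b : ZMod d, f b = ∑ n ∈ Finset.range d, f (n : ZMod d) := by
  refine Finset.sum_nbij' (fun b => b.val) (fun n => (n : ZMod d)) ?_ ?_ ?_ ?_ ?_
  · intro a _
    exact Finset.mem_range.mpr (ZMod.val_lt a)
  · intro a _
    exact Finset.mem_univ _
  · intro a _
    exact ZMod.natCast_zmod_val a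
  · intro a ha
    exact ZMod.val_cast_of_lt (Finset.mem_range.mp ha)
  · intro a _
    rw [ZMod.natCast_zmod_val]

lemma geom_zero (u : ℂ) (hu : u ≠ 1) (N : ℕ) (huN : u ^ N = 1) :
    ∑ n ∈ Finset.range N, u ^ n = 0 := by
  rw [geom_sum_eq hu, huN, sub_self, zero_div]

lemma sum_eZ_mul (x : ZMod d) (hx : x ≠ 0) : ∑ b : ZMod d, eZ d (b * x) = 0 := by
  rw [sum_zmod d (fun b => eZ d (b * x))]
  rw [Finset.sum_congr rfl fun n _ => eZ_nat_mul d n x]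
  refine geom_zero (eZ d x) ?_ d (eZ_pow_d d x)
  intro hone
  exact hx ((eZ_eq_one_iff d x).mp hone)

lemma pU_eq (a b : ZMod d) (α : ZMod d → ℂ) (k : ZMod d) :
    pU d a b α k = eZ d (b * (k - a)) * α (k - a) := by
  unfold pU eZ
  rw [ZMod.val_mul, ← omega_pow_mod]

lemma ip_pU (a b a' b' : ZMod d) (α : ZMod d → ℂ) :
    ip d (pU d a b α) (pU d a' b' α)
      = ∑ j : ZMod d, eZ d (b' * (j - a') - b * (j - a)) *
          ((starRingEnd ℂ) (α (j - a)) * α (j - a')) := by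
  unfold ip
  refine Finset.sum_congr rfl fun j _ => ?_
  rw [pU_eq, pU_eq, map_mul, eZ_conj,
    sub_eq_add_neg (b' * (j - a')) (b * (j - a)), eZ_add]
  ring

end Aux

/-- (Theorem 4(1) of the paper.) For `d = 4m` (`m ≥ 1`), the set
`S = {(0, 2i-1) : i = 1,…,d/4} ∪ {(0,0), (d/2,0), (d/2, d/2+1)}` of `3 + d/4`
generalized Bell states is 1-LOCC indistinguishable: there is no unit vector
`α ∈ ℂ^d` for which the vectors `X^a Z^b α`, `(a,b) ∈ S`, are pairwise
orthogonal. Hence `f_GBS(d) ≤ 3 + d/4`. -/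
theorem stmt_15 (m : ℕ) (hm : 1 ≤ m) (d : ℕ) [NeZero d] (hd : d = 4 * m) :
    ∃ S : Finset (ZMod d × ZMod d),
      S = (Finset.Icc 1 (d / 4)).image
              (fun i : ℕ => ((0 : ZMod d), ((2 * i - 1 : ℕ) : ZMod d))) ∪
            ({((0 : ZMod d), (0 : ZMod d)),
              ((((d / 2 : ℕ) : ZMod d)), (0 : ZMod d)),
              ((((d / 2 : ℕ) : ZMod d)), (((d / 2 + 1 : ℕ) : ZMod d)))} :
              Finset (ZMod d × ZMod d)) ∧
      S.card = 3 + d / 4 ∧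
      ¬ ∃ α : ZMod d → ℂ, ip d α α = 1 ∧
        ∀ p ∈ S, ∀ q ∈ S, p ≠ q → ip d (pU d p.1 p.2 α) (pU d q.1 q.2 α) = 0 := by
  have hne1 : ∀ n : ℕ, 0 < n → n < d → ((n : ZMod d)) ≠ 0 := by
    intro n h1 h2 hx
    have hv := ZMod.val_cast_of_lt h2
    rw [hx, ZMod.val_zero] at hv
    omega
  refine ⟨_, rfl, ?_, ?_⟩
  · -- cardinality
    have hA : ((d / 2 : ℕ) : ZMod d) ≠ 0 := hne1 _ (by omega) (by omega)
    have hB : ((d / 2 + 1 : ℕ) : ZMod d) ≠ 0 := hne1 _ (by omega) (by omega)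
    have hdisj : Disjoint
        ((Finset.Icc 1 (d / 4)).image
            (fun i : ℕ => ((0 : ZMod d), ((2 * i - 1 : ℕ) : ZMod d))))
        ({((0 : ZMod d), (0 : ZMod d)),
          ((((d / 2 : ℕ) : ZMod d)), (0 : ZMod d)),
          ((((d / 2 : ℕ) : ZMod d)), (((d / 2 + 1 : ℕ) : ZMod d)))} :
            Finset (ZMod d × ZMod d)) := by
      rw [Finset.disjoint_left]
      intro a ha hb
      obtain ⟨i, hi, rfl⟩ := Finset.mem_image.mp ha
      rw [Finset.mem_Icc] at hi
      simp only [Finset.mem_insert, Finset.mem_singleton, Prod.mk.injEq] at hb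
      rcases hb with ⟨_, h2⟩ | ⟨h1, _⟩ | ⟨h1, _⟩
      · exact hne1 (2 * i - 1) (by omega) (by omega) h2
      · exact hA h1.symm
      · exact hA h1.symm
    rw [Finset.card_union_of_disjoint hdisj]
    have hcard1 : ((Finset.Icc 1 (d / 4)).image
        (fun i : ℕ => ((0 : ZMod d), ((2 * i - 1 : ℕ) : ZMod d)))).card
        = (Finset.Icc 1 (d / 4)).card := by
      apply Finset.card_image_of_injOn
      intro i hi j hj hij
      simp only [Finset.coe_Icc, Set.mem_Icc] at hi hj
      have h2 : ((2 * i - 1 : ℕ) : ZMod d) = ((2 * j - 1 : ℕ) : ZMod d) :=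
        (Prod.ext_iff.mp hij).2
      have hv := congrArg ZMod.val h2
      rw [ZMod.val_cast_of_lt (by omega), ZMod.val_cast_of_lt (by omega)] at hv
      omega
    have hcard2 : ({((0 : ZMod d), (0 : ZMod d)),
          ((((d / 2 : ℕ) : ZMod d)), (0 : ZMod d)),
          ((((d / 2 : ℕ) : ZMod d)), (((d / 2 + 1 : ℕ) : ZMod d)))} :
            Finset (ZMod d × ZMod d)).card = 3 := by
      rw [Finset.card_insert_of_notMem, Finset.card_insert_of_notMem,
        Finset.card_singleton]
      · have hB' : ((d / 2 : ℕ) : ZMod d) + 1 ≠ 0 := by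
          intro hcon
          apply hB
          rw [Nat.cast_add, Nat.cast_one]
          exact hcon
        simp [Prod.ext_iff, Ne.symm hA, Ne.symm hB, Ne.symm hB']
      · have hB' : ((d / 2 : ℕ) : ZMod d) + 1 ≠ 0 := by
          intro hcon
          apply hB
          rw [Nat.cast_add, Nat.cast_one]
          exact hcon
        simp [Prod.ext_iff, Ne.symm hA, Ne.symm hB, Ne.symm hB']
    rw [hcard1, hcard2, Nat.card_Icc]
    omega
  · -- main part
    rintro ⟨α, hunit, horth⟩
    set hh : ZMod d := ((d / 2 : ℕ) : ZMod d) with hhdef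
    have hhne0 : hh ≠ 0 := hne1 _ (by omega) (by omega)
    have hhval : hh.val = d / 2 := by rw [hhdef]; exact ZMod.val_cast_of_lt (by omega)
    have hh_add : hh + hh = 0 := by
      rw [hhdef, ← Nat.cast_add, show d / 2 + d / 2 = d from by omega, ZMod.natCast_self]
    have hk_h : ∀ k : ZMod d, k + hh = k - hh := by
      intro k; linear_combination hh_add
    have h1c : ((d / 2 + 1 : ℕ) : ZMod d) = hh + 1 := by
      rw [hhdef, Nat.cast_add, Nat.cast_one]
    have negcast : ∀ a b : ℕ, a + b = d → -((a : ZMod d)) = ((b : ZMod d)) := by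
      intro a b hab
      have h0 : ((a : ZMod d)) + ((b : ZMod d)) = 0 := by
        rw [← Nat.cast_add, hab, ZMod.natCast_self]
      linear_combination -h0
    have two_c_zero : ∀ c : ZMod d, c + c = 0 → c = 0 ∨ c = hh := by
      intro c hc
      have hval : (c + c).val = 0 := by rw [hc, ZMod.val_zero]
      rw [ZMod.val_add] at hval
      have hdvd : d ∣ c.val + c.val := Nat.dvd_of_mod_eq_zero hval
      have hlt := ZMod.val_lt c
      obtain ⟨k, hk⟩ := hdvd
      have hcv : c.val = 0 ∨ c.val = d / 2 := by
        rcases Nat.lt_or_ge k 2 with h2 | h2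
        · interval_cases k <;> omega
        · have : d * 2 ≤ d * k := Nat.mul_le_mul_left d h2
          omega
      rcases hcv with h | h
      · left
        rw [← ZMod.natCast_zmod_val c, h, Nat.cast_zero]
      · right
        rw [← ZMod.natCast_zmod_val c, h]
    have eZhh : eZ d hh = -1 := by
      have h1 : eZ d hh = ω d ^ (d / 2) := by unfold eZ; rw [hhval]
      rw [h1]
      unfold ω
      rw [← Complex.exp_nat_mul]
      have hcd : ((d / 2 : ℕ) : ℂ) * 2 = (d : ℂ) := by
        have h2 : ((d / 2) * 2 : ℕ) = d := by omega
        exact_mod_cast congrArg (fun k : ℕ => (k : ℂ)) h2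
      have hdz : (d : ℂ) ≠ 0 := Nat.cast_ne_zero.mpr (by omega)
      have harg : ((d / 2 : ℕ) : ℂ) * (2 * (Real.pi : ℂ) * Complex.I / (d : ℂ))
          = (Real.pi : ℂ) * Complex.I := by
        field_simp
        linear_combination hcd
      rw [harg, Complex.exp_pi_mul_I]
    -- membership facts
    have hmem00 : ((0 : ZMod d), (0 : ZMod d)) ∈
        (Finset.Icc 1 (d / 4)).image
            (fun i : ℕ => ((0 : ZMod d), ((2 * i - 1 : ℕ) : ZMod d))) ∪
          ({((0 : ZMod d), (0 : ZMod d)), (hh, (0 : ZMod d)),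
            (hh, (((d / 2 + 1 : ℕ) : ZMod d)))} : Finset (ZMod d × ZMod d)) :=
      Finset.mem_union_right _ (by simp)
    have hmemH : ((hh, (0 : ZMod d)) : ZMod d × ZMod d) ∈
        (Finset.Icc 1 (d / 4)).image
            (fun i : ℕ => ((0 : ZMod d), ((2 * i - 1 : ℕ) : ZMod d))) ∪
          ({((0 : ZMod d), (0 : ZMod d)), (hh, (0 : ZMod d)),
            (hh, (((d / 2 + 1 : ℕ) : ZMod d)))} : Finset (ZMod d × ZMod d)) :=
      Finset.mem_union_right _ (by simp)
    have hmemH1 : ((hh, (((d / 2 + 1 : ℕ) : ZMod d))) : ZMod d × ZMod d) ∈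
        (Finset.Icc 1 (d / 4)).image
            (fun i : ℕ => ((0 : ZMod d), ((2 * i - 1 : ℕ) : ZMod d))) ∪
          ({((0 : ZMod d), (0 : ZMod d)), (hh, (0 : ZMod d)),
            (hh, (((d / 2 + 1 : ℕ) : ZMod d)))} : Finset (ZMod d × ZMod d)) :=
      Finset.mem_union_right _ (by simp)
    have hmemI : ∀ i : ℕ, 1 ≤ i → i ≤ m →
        (((0 : ZMod d), ((2 * i - 1 : ℕ) : ZMod d)) : ZMod d × ZMod d) ∈
          (Finset.Icc 1 (d / 4)).image
              (fun i : ℕ => ((0 : ZMod d), ((2 * i - 1 : ℕ) : ZMod d))) ∪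
            ({((0 : ZMod d), (0 : ZMod d)), (hh, (0 : ZMod d)),
              (hh, (((d / 2 + 1 : ℕ) : ZMod d)))} : Finset (ZMod d × ZMod d)) := by
      intro i hi1 hi2
      exact Finset.mem_union_left _
        (Finset.mem_image.mpr ⟨i, Finset.mem_Icc.mpr ⟨hi1, by omega⟩, rfl⟩)
    -- orthogonality consequences
    have hFsmall : ∀ i : ℕ, 1 ≤ i → i ≤ m →
        (∑ j : ZMod d, eZ d (((2 * i - 1 : ℕ) : ZMod d) * j) *
          ((starRingEnd ℂ) (α j) * α j)) = 0 := by
      intro i hi1 hi2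
      have hne : (((0 : ZMod d), (0 : ZMod d)) : ZMod d × ZMod d)
          ≠ ((0 : ZMod d), ((2 * i - 1 : ℕ) : ZMod d)) := by
        intro hcon
        exact hne1 (2 * i - 1) (by omega) (by omega) (congrArg Prod.snd hcon).symm
      have h0 := horth _ hmem00 _ (hmemI i hi1 hi2) hne
      have h0' : ip d (pU d 0 0 α) (pU d 0 ((2 * i - 1 : ℕ) : ZMod d) α) = 0 := h0
      rw [ip_pU] at h0'
      simpa using h0'
    have hG0 : (∑ j : ZMod d, eZ d ((0 : ZMod d) * j) *
        ((starRingEnd ℂ) (α (j - hh)) * α j)) = 0 := by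
      have hne : ((hh, (0 : ZMod d)) : ZMod d × ZMod d) ≠ ((0 : ZMod d), (0 : ZMod d)) := by
        intro hcon
        exact hhne0 (congrArg Prod.fst hcon)
      have h0 := horth _ hmemH _ hmem00 hne
      have h0' : ip d (pU d hh 0 α) (pU d 0 0 α) = 0 := h0
      rw [ip_pU] at h0'
      simpa using h0'
    have hGsmall : ∀ i : ℕ, 1 ≤ i → i ≤ m →
        (∑ j : ZMod d, eZ d (((2 * i - 1 : ℕ) : ZMod d) * j) *
          ((starRingEnd ℂ) (α (j - hh)) * α j)) = 0 := by
      intro i hi1 hi2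
      have hne : ((hh, (0 : ZMod d)) : ZMod d × ZMod d)
          ≠ ((0 : ZMod d), ((2 * i - 1 : ℕ) : ZMod d)) := by
        intro hcon
        exact hhne0 (congrArg Prod.fst hcon)
      have h0 := horth _ hmemH _ (hmemI i hi1 hi2) hne
      have h0' : ip d (pU d hh 0 α) (pU d 0 ((2 * i - 1 : ℕ) : ZMod d) α) = 0 := h0
      rw [ip_pU] at h0'
      simpa using h0'
    have hGeven : ∀ i : ℕ, 1 ≤ i → i ≤ m →
        (∑ j : ZMod d, eZ d ((((2 * i - 1 : ℕ) : ZMod d) - hh - 1) * j) *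
          ((starRingEnd ℂ) (α (j - hh)) * α j)) = 0 := by
      intro i hi1 hi2
      have hne : ((hh, (((d / 2 + 1 : ℕ) : ZMod d))) : ZMod d × ZMod d)
          ≠ ((0 : ZMod d), ((2 * i - 1 : ℕ) : ZMod d)) := by
        intro hcon
        exact hhne0 (congrArg Prod.fst hcon)
      have h0 := horth _ hmemH1 _ (hmemI i hi1 hi2) hne
      have h0' : ip d (pU d hh ((d / 2 + 1 : ℕ) : ZMod d) α)
          (pU d 0 ((2 * i - 1 : ℕ) : ZMod d) α) = 0 := h0
      rw [ip_pU, h1c] at h0'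
      simp only [sub_zero, zero_mul] at h0'
      have htrans : (∑ j : ZMod d,
          eZ d (((2 * i - 1 : ℕ) : ZMod d) * j - (hh + 1) * (j - hh)) *
            ((starRingEnd ℂ) (α (j - hh)) * α j))
          = eZ d ((hh + 1) * hh) * ∑ j : ZMod d,
              eZ d ((((2 * i - 1 : ℕ) : ZMod d) - hh - 1) * j) *
                ((starRingEnd ℂ) (α (j - hh)) * α j) := by
        rw [Finset.mul_sum]
        refine Finset.sum_congr rfl fun j _ => ?_
        rw [← mul_assoc (eZ d ((hh + 1) * hh)), ← eZ_add]
        have hAB : ((2 * i - 1 : ℕ) : ZMod d) * j - (hh + 1) * (j - hh)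
            = (hh + 1) * hh + (((2 * i - 1 : ℕ) : ZMod d) - hh - 1) * j := by ring
        rw [hAB]
      rw [htrans] at h0'
      exact (mul_eq_zero.mp h0').resolve_left (eZ_ne_zero d _)
    -- conjugation closure
    have hFconj : ∀ x : ZMod d,
        (∑ j : ZMod d, eZ d (x * j) * ((starRingEnd ℂ) (α j) * α j)) = 0 →
        (∑ j : ZMod d, eZ d (-x * j) * ((starRingEnd ℂ) (α j) * α j)) = 0 := by
      intro x hx
      have key : (starRingEnd ℂ) (∑ j : ZMod d, eZ d (x * j) *
          ((starRingEnd ℂ) (α j) * α j))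
          = ∑ j : ZMod d, eZ d (-x * j) * ((starRingEnd ℂ) (α j) * α j) := by
        rw [map_sum]
        refine Finset.sum_congr rfl fun j _ => ?_
        rw [map_mul, map_mul, eZ_conj, Complex.conj_conj, neg_mul]
        ring
      rw [← key, hx, map_zero]
    have hGconj : ∀ x : ZMod d,
        (∑ j : ZMod d, eZ d (x * j) * ((starRingEnd ℂ) (α (j - hh)) * α j)) = 0 →
        (∑ j : ZMod d, eZ d (-x * j) * ((starRingEnd ℂ) (α (j - hh)) * α j)) = 0 := by
      intro x hx
      have key : (starRingEnd ℂ) (∑ j : ZMod d, eZ d (x * j) *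
          ((starRingEnd ℂ) (α (j - hh)) * α j))
          = eZ d (-(x * hh)) * ∑ j : ZMod d, eZ d (-x * j) *
              ((starRingEnd ℂ) (α (j - hh)) * α j) := by
        rw [map_sum, Finset.mul_sum]
        refine Fintype.sum_equiv (Equiv.addRight hh) _ _ fun k => ?_
        simp only [Equiv.coe_addRight]
        rw [map_mul, map_mul, eZ_conj, Complex.conj_conj, add_sub_cancel_right]
        rw [hk_h k]
        rw [← mul_assoc (eZ d (-(x * hh))), ← eZ_add]
        have hAB : -(x * hh) + -x * (k - hh) = -(x * k) := by ring
        rw [hAB]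
        ring
      rw [hx, map_zero] at key
      exact (mul_eq_zero.mp key.symm).resolve_left (eZ_ne_zero d _)
    -- odd frequencies
    have oddZero : ∀ Φ : ZMod d → ℂ,
        (∀ x, Φ x = 0 → Φ (-x) = 0) →
        (∀ i : ℕ, 1 ≤ i → i ≤ m → Φ (((2 * i - 1 : ℕ) : ZMod d)) = 0) →
        ∀ n : ℕ, n % 2 = 1 → Φ ((n : ZMod d)) = 0 := by
      intro Φ hconj hsmall
      have small : ∀ n : ℕ, n % 2 = 1 → n < d / 2 → Φ ((n : ZMod d)) = 0 := by
        intro n hn hlt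
        have h := hsmall ((n + 1) / 2) (by omega) (by omega)
        rwa [show 2 * ((n + 1) / 2) - 1 = n from by omega] at h
      intro n hn
      have h1 : ((n : ZMod d)) = ((n % d : ℕ) : ZMod d) := (ZMod.natCast_mod n d).symm
      rw [h1]
      have hrlt : n % d < d := Nat.mod_lt _ (by omega)
      have hrodd : n % d % 2 = 1 := by
        rw [Nat.mod_mod_of_dvd n (by omega : 2 ∣ d)]
        exact hn
      rcases lt_or_ge (n % d) (d / 2) with hc | hc
      · exact small _ hrodd hc
      · have hs1 : (d - n % d) % 2 = 1 := by omega
        have hs2 : d - n % d < d / 2 := by omega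
        have h2 := small (d - n % d) hs1 hs2
        have h3 := hconj _ h2
        have hsum : (d - n % d) + n % d = d := by omega
        rwa [negcast _ _ hsum] at h3
    have hFodd : ∀ n : ℕ, n % 2 = 1 →
        (∑ j : ZMod d, eZ d ((n : ZMod d) * j) * ((starRingEnd ℂ) (α j) * α j)) = 0 :=
      oddZero _ hFconj hFsmall
    have hGodd : ∀ n : ℕ, n % 2 = 1 →
        (∑ j : ZMod d, eZ d ((n : ZMod d) * j) *
          ((starRingEnd ℂ) (α (j - hh)) * α j)) = 0 :=
      oddZero _ hGconj hGsmall
    -- all frequencies for G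
    have hGall : ∀ x : ZMod d,
        (∑ j : ZMod d, eZ d (x * j) * ((starRingEnd ℂ) (α (j - hh)) * α j)) = 0 := by
      have hGmid : ∀ n : ℕ, n % 2 = 0 → 2 ≤ n → n ≤ d / 2 →
          (∑ j : ZMod d, eZ d ((n : ZMod d) * j) *
            ((starRingEnd ℂ) (α (j - hh)) * α j)) = 0 := by
        intro n hpar h2 hle
        obtain ⟨i, hi1, hi2, hieq⟩ : ∃ i, 1 ≤ i ∧ i ≤ m ∧ (2 * i - 1) + n = d / 2 + 1 :=
          ⟨(d / 2 - n) / 2 + 1, by omega, by omega, by omega⟩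
        have h0 := hGeven i hi1 hi2
        have harg : (((2 * i - 1 : ℕ) : ZMod d) - hh - 1) = -((n : ZMod d)) := by
          have hcast : ((2 * i - 1 : ℕ) : ZMod d) + ((n : ZMod d)) = hh + 1 := by
            rw [hhdef, ← Nat.cast_add, hieq, Nat.cast_add, Nat.cast_one]
          linear_combination hcast
        rw [harg] at h0
        have h3 := hGconj _ h0
        rwa [neg_neg] at h3
      intro x
      have hx : x = ((x.val : ℕ) : ZMod d) := (ZMod.natCast_zmod_val x).symm
      rw [hx]
      have hlt : x.val < d := ZMod.val_lt x
      rcases Nat.eq_zero_or_pos x.val with h0 | hpos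
      · rw [h0, Nat.cast_zero]
        exact hG0
      rcases Nat.even_or_odd x.val with he | ho
      · rw [Nat.even_iff] at he
        rcases le_or_gt x.val (d / 2) with hle | hgt
        · exact hGmid x.val he (by omega) hle
        · have hs1 : (d - x.val) % 2 = 0 := by omega
          have hs2 : 2 ≤ d - x.val := by omega
          have hs3 : d - x.val ≤ d / 2 := by omega
          have h1 := hGmid (d - x.val) hs1 hs2 hs3
          have h2 := hGconj _ h1
          have hsum : (d - x.val) + x.val = d := by omega
          rwa [negcast _ _ hsum] at h2
      · exact hGodd x.val (Nat.odd_iff.mp ho)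
    -- Fourier inversion for G : each coefficient vanishes
    have claim2 : ∀ k0 : ZMod d, (starRingEnd ℂ) (α (k0 - hh)) * α k0 = 0 := by
      intro k0
      have h0 : ∑ b : ZMod d, eZ d (-(b * k0)) *
          (∑ j : ZMod d, eZ d (b * j) * ((starRingEnd ℂ) (α (j - hh)) * α j)) = 0 :=
        Finset.sum_eq_zero fun b _ => by rw [hGall b, mul_zero]
      have h1 : ∀ b ∈ (Finset.univ : Finset (ZMod d)),
          eZ d (-(b * k0)) * (∑ j : ZMod d, eZ d (b * j) *
            ((starRingEnd ℂ) (α (j - hh)) * α j))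
          = ∑ j : ZMod d, eZ d (b * (j - k0)) *
              ((starRingEnd ℂ) (α (j - hh)) * α j) := by
        intro b _
        rw [Finset.mul_sum]
        refine Finset.sum_congr rfl fun j _ => ?_
        rw [← mul_assoc, ← eZ_add]
        have hAB : -(b * k0) + b * j = b * (j - k0) := by ring
        rw [hAB]
      rw [Finset.sum_congr rfl h1, Finset.sum_comm] at h0
      have h2 : ∀ j : ZMod d,
          (∑ b : ZMod d, eZ d (b * (j - k0)) * ((starRingEnd ℂ) (α (j - hh)) * α j))
          = if j = k0 then (d : ℂ) * ((starRingEnd ℂ) (α (j - hh)) * α j) else 0 := by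
        intro j
        rw [← Finset.sum_mul]
        by_cases hj : j = k0
        · subst hj
          rw [if_pos rfl]
          have hone : ∀ b ∈ (Finset.univ : Finset (ZMod d)), eZ d (b * (j - j)) = 1 := by
            intro b _
            rw [sub_self, mul_zero, eZ_zero]
          rw [Finset.sum_congr rfl hone, Finset.sum_const, Finset.card_univ,
            ZMod.card, nsmul_eq_mul, mul_one]
        · rw [if_neg hj, sum_eZ_mul d _ (sub_ne_zero.mpr hj), zero_mul]
      rw [Finset.sum_congr rfl (fun j _ => h2 j), Finset.sum_ite_eq'] at h0
      simp only [Finset.mem_univ, if_true] at h0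
      have hdne : ((d : ℕ) : ℂ) ≠ 0 := Nat.cast_ne_zero.mpr (by omega)
      exact (mul_eq_zero.mp h0).resolve_left hdne
    -- half-period symmetry of |α|²
    have claim1 : ∀ k0 : ZMod d,
        (starRingEnd ℂ) (α k0) * α k0 = (starRingEnd ℂ) (α (k0 + hh)) * α (k0 + hh) := by
      intro k0
      have h0 : ∑ r ∈ Finset.range (d / 2), eZ d (-(((2 * r + 1 : ℕ) : ZMod d) * k0)) *
          (∑ j : ZMod d, eZ d (((2 * r + 1 : ℕ) : ZMod d) * j) *
            ((starRingEnd ℂ) (α j) * α j)) = 0 :=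
        Finset.sum_eq_zero fun r _ => by rw [hFodd (2 * r + 1) (by omega), mul_zero]
      have h1 : ∀ r ∈ Finset.range (d / 2),
          eZ d (-(((2 * r + 1 : ℕ) : ZMod d) * k0)) *
            (∑ j : ZMod d, eZ d (((2 * r + 1 : ℕ) : ZMod d) * j) *
              ((starRingEnd ℂ) (α j) * α j))
          = ∑ j : ZMod d, eZ d (j - k0) ^ (2 * r + 1) *
              ((starRingEnd ℂ) (α j) * α j) := by
        intro r _
        rw [Finset.mul_sum]
        refine Finset.sum_congr rfl fun j _ => ?_
        rw [← mul_assoc, ← eZ_add, ← eZ_nat_mul]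
        have hAB : -(((2 * r + 1 : ℕ) : ZMod d) * k0) + ((2 * r + 1 : ℕ) : ZMod d) * j
            = ((2 * r + 1 : ℕ) : ZMod d) * (j - k0) := by ring
        rw [hAB]
      rw [Finset.sum_congr rfl h1, Finset.sum_comm] at h0
      have h2 : ∀ j : ZMod d,
          (∑ r ∈ Finset.range (d / 2), eZ d (j - k0) ^ (2 * r + 1) *
            ((starRingEnd ℂ) (α j) * α j))
          = (if j = k0 then ((d / 2 : ℕ) : ℂ) * ((starRingEnd ℂ) (α j) * α j) else 0)
            + (if j = k0 + hh then -((d / 2 : ℕ) : ℂ) *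
                ((starRingEnd ℂ) (α j) * α j) else 0) := by
        intro j
        rw [← Finset.sum_mul]
        by_cases hj : j = k0
        · subst hj
          rw [if_pos rfl, if_neg (fun hcon => hhne0 (left_eq_add.mp hcon))]
          simp only [sub_self, eZ_zero, one_pow, Finset.sum_const, Finset.card_range,
            nsmul_eq_mul, mul_one, add_zero]
        · by_cases hj2 : j = k0 + hh
          · subst hj2
            rw [if_neg hj, if_pos rfl, zero_add]
            have hsub : k0 + hh - k0 = hh := by ring
            rw [hsub, eZhh]
            have hodd : ∀ r ∈ Finset.range (d / 2), (-1 : ℂ) ^ (2 * r + 1) = -1 :=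
              fun r _ => Odd.neg_one_pow ⟨r, by ring⟩
            rw [Finset.sum_congr rfl hodd, Finset.sum_const, Finset.card_range,
              nsmul_eq_mul]
            ring
          · rw [if_neg hj, if_neg hj2, add_zero]
            have hc0 : j - k0 ≠ 0 := sub_ne_zero.mpr hj
            have hch : j - k0 ≠ hh := by
              intro hcon
              apply hj2
              linear_combination hcon
            have hcc : j - k0 + (j - k0) ≠ 0 := by
              intro hcon
              rcases two_c_zero _ hcon with h | h
              · exact hc0 h
              · exact hch h
            have hu1 : eZ d (j - k0) * eZ d (j - k0) ≠ 1 := by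
              rw [← eZ_add]
              intro hone
              exact hcc ((eZ_eq_one_iff d _).mp hone)
            have hgeom : ∑ r ∈ Finset.range (d / 2),
                (eZ d (j - k0) * eZ d (j - k0)) ^ r = 0 := by
              apply geom_zero _ hu1
              rw [← pow_two, ← pow_mul, show 2 * (d / 2) = d from by omega, eZ_pow_d]
            have hterm : ∀ r ∈ Finset.range (d / 2),
                eZ d (j - k0) ^ (2 * r + 1)
                  = (eZ d (j - k0) * eZ d (j - k0)) ^ r * eZ d (j - k0) := by
              intro r _
              rw [pow_succ, pow_mul, pow_two]
            rw [Finset.sum_congr rfl hterm, ← Finset.sum_mul, hgeom, zero_mul, zero_mul]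
      rw [Finset.sum_congr rfl (fun j _ => h2 j), Finset.sum_add_distrib,
        Finset.sum_ite_eq', Finset.sum_ite_eq'] at h0
      simp only [Finset.mem_univ, if_true] at h0
      have hcne : ((d / 2 : ℕ) : ℂ) ≠ 0 := Nat.cast_ne_zero.mpr (by omega)
      apply mul_left_cancel₀ hcne
      linear_combination h0
    -- conclude α = 0, contradiction
    have tzero : ∀ j : ZMod d, (starRingEnd ℂ) (α j) * α j = 0 := by
      intro j
      have hc2 := claim2 (j + hh)
      rw [add_sub_cancel_right] at hc2
      rcases mul_eq_zero.mp hc2 with h1 | h1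
      · rw [h1, zero_mul]
      · rw [claim1 j, h1, mul_zero]
    have hzero : ip d α α = 0 := by
      unfold ip
      exact Finset.sum_eq_zero fun j _ => tzero j
    rw [hzero] at hunit
    exact zero_ne_one hunit
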